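/- Let N, m be natural numbers with m < N and fix an index x : Fin N. The number of choice sequences of length m+1 after which x is not selected equals (N − m − 1) times the number of choice sequences of length m after which x is not selected. (This is the recurrence underlying the induction: the not-selected count is multiplied by N−m−1 out of the N−m possible extensions at each step.) -/
import Mathlib


/-- The permutation of `Fin N` produced by `k` iterations of the partial
Fisher–Yates shuffle driven by the choice sequence `j`: iteration `t`
(for `t = 0, …, k-1`) swaps the array entries at positions `N-1-t` and
`j t`, the iterations being performed left-to-right (`t = 0` first).
As a permutation this is `swap (N-1) (j 0) * ⋯ * swap (N-1-(k-1)) (j (k-1))`,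
so that `fyPerm N k j p` is the final content of array slot `p` when the
array is initialized with `a[p] = p`. -/
def fyPerm (N k : ℕ) (j : ∀ t : Fin k, Fin (N - (t : ℕ))) : Equiv.Perm (Fin N) :=
  (List.ofFn fun t : Fin k =>
      Equiv.swap
        (⟨N - 1 - (t : ℕ), by have := (j t).isLt; omega⟩ : Fin N)
        (⟨((j t) : ℕ), by have := (j t).isLt; omega⟩ : Fin N)).prod
theorem fyPerm_snoc (N m : ℕ) (hm : m < N) (j : ∀ t : Fin m, Fin (N - (t : ℕ))) (b : Fin (N - m)) :
    fyPerm N (m + 1) (Fin.snoc (α := fun t : Fin (m+1) => Fin (N - (t:ℕ))) j b)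
      = fyPerm N m j *
        Equiv.swap (⟨N - 1 - m, by omega⟩ : Fin N)
          (⟨(b : ℕ), by have := b.isLt; omega⟩ : Fin N) := by
  unfold fyPerm
  rw [List.ofFn_succ', List.prod_concat]
  congr 1
  · refine congrArg List.prod (congrArg List.ofFn (funext fun t => ?_))
    congr 1 <;> apply Fin.ext <;> simp
  · congr 1 <;> apply Fin.ext <;> simp

/-- The recurrence underlying the induction: for `m < N` and a fixed index
`x : Fin N`, the number of choice sequences of length `m+1` after which
`x` is not selected equals `N - m - 1` times the number of choice sequences
of length `m` after which `x` is not selected. -/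
theorem fy_not_selected_recurrence (N m : ℕ) (hm : m < N) (x : Fin N) :
    (Finset.univ.filter fun j : ∀ t : Fin (m + 1), Fin (N - (t : ℕ)) =>
        (((fyPerm N (m + 1) j)⁻¹ x : Fin N) : ℕ) < N - (m + 1)).card
      = (N - m - 1) *
        (Finset.univ.filter fun j : ∀ t : Fin m, Fin (N - (t : ℕ)) =>
          (((fyPerm N m j)⁻¹ x : Fin N) : ℕ) < N - m).card := by
  classical
  set a : Fin N := ⟨N - 1 - m, by omega⟩ with ha
  -- Step 1: transfer to the product type via `Fin.snocEquiv`.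
  have h1 : (Finset.univ.filter fun j : ∀ t : Fin (m + 1), Fin (N - (t : ℕ)) =>
        (((fyPerm N (m + 1) j)⁻¹ x : Fin N) : ℕ) < N - (m + 1)).card
      = (Finset.univ.filter fun p :
            Fin (N - m) × (∀ t : Fin m, Fin (N - (t : ℕ))) =>
          (((fyPerm N (m + 1) (Fin.snoc (α := fun t : Fin (m+1) => Fin (N - (t:ℕ))) p.2 p.1))⁻¹ x : Fin N) : ℕ) < N - (m + 1)).card := by
    refine (Finset.card_equiv (Fin.snocEquiv fun t : Fin (m+1) => Fin (N - (t:ℕ))) ?_).symm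
    intro p
    simp [Fin.snocEquiv]
  rw [h1]
  -- Step 2: fiberwise counting.
  rw [Finset.card_filter, Fintype.sum_prod_type, Finset.sum_comm]
  have h2 : ∀ (j : ∀ t : Fin m, Fin (N - (t : ℕ))),
      (∑ b : Fin (N - m),
          if (((fyPerm N (m + 1) (Fin.snoc (α := fun t : Fin (m+1) => Fin (N - (t:ℕ))) j b))⁻¹ x : Fin N) : ℕ) < N - (m + 1) then 1 else 0)
        = if (((fyPerm N m j)⁻¹ x : Fin N) : ℕ) < N - m then N - m - 1 else 0 := by
    intro j
    set y : Fin N := (fyPerm N m j)⁻¹ x with hy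
    have hcond : ∀ b : Fin (N - m),
        ((((fyPerm N (m + 1) (Fin.snoc (α := fun t : Fin (m+1) => Fin (N - (t:ℕ))) j b))⁻¹ x : Fin N) : ℕ) < N - (m + 1))
          ↔ ((y : ℕ) < N - m ∧ (b : ℕ) ≠ (y : ℕ)) := by
      intro b
      rw [fyPerm_snoc N m hm j b, mul_inv_rev, Equiv.Perm.mul_apply, Equiv.swap_inv, ← hy]
      have hb := b.isLt
      have hyl := y.isLt
      rw [Equiv.swap_apply_def]
      split_ifs with h1 h2
      · rw [Fin.ext_iff] at h1; simp only [ha] at h1 ⊢; simp; omega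
      · rw [Fin.ext_iff] at h2; simp only [ha] at h2 ⊢; simp at h2 ⊢; omega
      · rw [Fin.ext_iff] at h1 h2; simp only [ha] at h1 h2 ⊢; simp at h1 h2 ⊢; omega
    simp only [hcond]
    by_cases hy' : (y : ℕ) < N - m
    · simp only [hy', true_and, if_true]
      rw [← Finset.card_filter]
      have : (Finset.univ.filter fun b : Fin (N - m) => (b : ℕ) ≠ (y : ℕ))
          = Finset.univ.erase ⟨(y : ℕ), hy'⟩ := by
        ext b
        simp [Fin.ext_iff]
      rw [this, Finset.card_erase_of_mem (Finset.mem_univ _)]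
      simp
    · simp [hy']
  simp only [h2]
  rw [Finset.sum_ite, Finset.sum_const, Finset.sum_const_zero, add_zero, smul_eq_mul, mul_comm]
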